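/- An element x : T belongs to M if and only if x admits an M-recursive description; that is, M coincides with the set of all elements of T which admit an M-recursive description. -/

import Mathlib

def RecClosed {T : Type*} {ι : Type*} (n : ι → ℕ)
    (ops : ∀ i : ι, (Fin (n i) → T) → T) (Base : Set T) (S : Set T) : Prop :=
  Base ⊆ S ∧ ∀ i : ι, ∀ v : Fin (n i) → T, (∀ j, v j ∈ S) → ops i v ∈ S

def Mset {T : Type*} {ι : Type*} (n : ι → ℕ)
    (ops : ∀ i : ι, (Fin (n i) → T) → T) (Base : Set T) : Set T :=
  ⋂₀ {S : Set T | RecClosed n ops Base S}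

/-- `l` is an M-recursive description of `x`: `l` is nonempty, its last entry is `x`,
and each entry either lies in `Base` or is the value of some operation applied to
elements occurring at strictly earlier positions of `l`. -/
def IsDescription {T : Type*} {ι : Type*} (n : ι → ℕ)
    (ops : ∀ i : ι, (Fin (n i) → T) → T) (Base : Set T) (l : List T) (x : T) : Prop :=
  l ≠ [] ∧ l.getLast? = some x ∧
    ∀ p : Fin l.length, l.get p ∈ Base ∨
      ∃ i : ι, ∃ v : Fin (n i) → T, l.get p = ops i v ∧
        ∀ j, ∃ q : Fin l.length, (q : ℕ) < (p : ℕ) ∧ l.get q = v j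

section Aux

variable {T : Type*} {ι : Type*} (n : ι → ℕ)
    (ops : ∀ i : ι, (Fin (n i) → T) → T) (Base : Set T)

/-- every entry of the list is base or an op applied to earlier entries -/
def Good (l : List T) : Prop :=
  ∀ p : Fin l.length, l.get p ∈ Base ∨
    ∃ i : ι, ∃ v : Fin (n i) → T, l.get p = ops i v ∧
      ∀ j, ∃ q : Fin l.length, (q : ℕ) < (p : ℕ) ∧ l.get q = v j

variable {n ops Base}

lemma good_append {l l' : List T} (hl : Good n ops Base l) (hl' : Good n ops Base l') :
    Good n ops Base (l ++ l') := by
  intro p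
  have hp := p.isLt
  simp only [List.length_append] at hp
  rcases lt_or_ge (p : ℕ) l.length with h | h
  · have e : (l ++ l').get p = l.get ⟨p, h⟩ := by
      simp [List.get_eq_getElem, List.getElem_append_left h]
    rcases hl ⟨p, h⟩ with hb | ⟨i, v, hv, hw⟩
    · left; rw [e]; exact hb
    · right
      refine ⟨i, v, by rw [e]; exact hv, fun j => ?_⟩
      obtain ⟨q, hq, hqv⟩ := hw j
      refine ⟨⟨q, by simp only [List.length_append]; omega⟩, hq, ?_⟩
      simpa [List.get_eq_getElem, List.getElem_append_left q.isLt] using hqv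
  · have h2 : (p : ℕ) - l.length < l'.length := by omega
    have e : (l ++ l').get p = l'.get ⟨(p : ℕ) - l.length, h2⟩ := by
      simp [List.get_eq_getElem, List.getElem_append_right h]
    rcases hl' ⟨(p : ℕ) - l.length, h2⟩ with hb | ⟨i, v, hv, hw⟩
    · left; rw [e]; exact hb
    · right
      refine ⟨i, v, by rw [e]; exact hv, fun j => ?_⟩
      obtain ⟨q, hq, hqv⟩ := hw j
      have hq0 : (q : ℕ) < (p : ℕ) - l.length := hq
      have hq1 : (q : ℕ) < l'.length := q.isLt
      refine ⟨⟨(q : ℕ) + l.length, by simp only [List.length_append]; omega⟩, by simp only [Fin.val_mk]; omega, ?_⟩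
      have : l.length ≤ (q : ℕ) + l.length := by omega
      simp only [List.get_eq_getElem] at hqv ⊢
      rw [List.getElem_append_right this]
      simpa using hqv

lemma good_flatten {L : List (List T)} (h : ∀ l ∈ L, Good n ops Base l) :
    Good n ops Base L.flatten := by
  induction L with
  | nil => intro p; exact absurd p.isLt (by simp)
  | cons a L ih =>
      rw [List.flatten_cons]
      exact good_append (h a (by simp)) (ih fun l hl => h l (by simp [hl]))

lemma description_of_good {l : List T} (hl : Good n ops Base l) {a : T} (ha : a ∈ l) :
    IsDescription n ops Base (l ++ [a]) a := by
  obtain ⟨p, hp⟩ := List.mem_iff_get.mp ha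
  refine ⟨by simp, by simp, ?_⟩
  intro q
  have hq := q.isLt
  simp only [List.length_append, List.length_singleton] at hq
  rcases lt_or_ge (q : ℕ) l.length with h | h
  · -- position inside l
    have e : (l ++ [a]).get q = l.get ⟨q, h⟩ := by
      simp [List.get_eq_getElem, List.getElem_append_left h]
    rcases hl ⟨q, h⟩ with hb | ⟨i, v, hv, hw⟩
    · left; rw [e]; exact hb
    · right
      refine ⟨i, v, by rw [e]; exact hv, fun j => ?_⟩
      obtain ⟨q', hq', hqv⟩ := hw j
      refine ⟨⟨q', by simp⟩, hq', ?_⟩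
      simpa [List.get_eq_getElem, List.getElem_append_left q'.isLt] using hqv
  · -- last position, entry is a = l.get p
    have hql : (q : ℕ) = l.length := by omega
    have e : (l ++ [a]).get q = l.get p := by
      simp only [List.get_eq_getElem]
      rw [List.getElem_append_right h]
      simp [hql, ← hp]
    rcases hl p with hb | ⟨i, v, hv, hw⟩
    · left; rw [e]; exact hb
    · right
      refine ⟨i, v, by rw [e]; exact hv, fun j => ?_⟩
      obtain ⟨q', hq', hqv⟩ := hw j
      have hq1 : (q' : ℕ) < l.length := q'.isLt
      refine ⟨⟨q', by simp⟩, by simp only [Fin.val_mk]; omega, ?_⟩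
      simpa [List.get_eq_getElem, List.getElem_append_left q'.isLt] using hqv

lemma good_snoc_op {l : List T} (hl : Good n ops Base l) (i : ι) (v : Fin (n i) → T)
    (hv : ∀ j, v j ∈ l) : Good n ops Base (l ++ [ops i v]) := by
  intro q
  have hq := q.isLt
  simp only [List.length_append, List.length_singleton] at hq
  rcases lt_or_ge (q : ℕ) l.length with h | h
  · have e : (l ++ [ops i v]).get q = l.get ⟨q, h⟩ := by
      simp [List.get_eq_getElem, List.getElem_append_left h]
    rcases hl ⟨q, h⟩ with hb | ⟨i', v', hv', hw⟩
    · left; rw [e]; exact hb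
    · right
      refine ⟨i', v', by rw [e]; exact hv', fun j => ?_⟩
      obtain ⟨q', hq', hqv⟩ := hw j
      refine ⟨⟨q', by simp⟩, hq', ?_⟩
      simpa [List.get_eq_getElem, List.getElem_append_left q'.isLt] using hqv
  · have hql : (q : ℕ) = l.length := by omega
    have e : (l ++ [ops i v]).get q = ops i v := by
      simp only [List.get_eq_getElem]
      rw [List.getElem_append_right h]
      simp [hql]
    right
    refine ⟨i, v, e, fun j => ?_⟩
    obtain ⟨p, hp⟩ := List.mem_iff_get.mp (hv j)
    have hp1 : (p : ℕ) < l.length := p.isLt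
    refine ⟨⟨p, by simp⟩, by simp only [Fin.val_mk]; omega, ?_⟩
    simpa [List.get_eq_getElem, List.getElem_append_left p.isLt] using hp

lemma recClosed_good_set :
    RecClosed n ops Base {x : T | ∃ l : List T, Good n ops Base l ∧ x ∈ l} := by
  constructor
  · intro b hb
    refine ⟨[b], fun p => ?_, by simp⟩
    left
    have h0 := p.isLt
    simp only [List.length_singleton] at h0
    have : (p : ℕ) = 0 := by omega
    simpa [List.get_eq_getElem, this] using hb
  · intro i v hv
    choose f hf hmem using hv
    set L := ((List.finRange (n i)).map f).flatten with hL
    have hgood : Good n ops Base L := by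
      refine good_flatten fun l hl => ?_
      simp only [hL, List.mem_map] at hl
      obtain ⟨j, _, rfl⟩ := hl
      exact hf j
    have hmemL : ∀ j, v j ∈ L := by
      intro j
      refine List.mem_flatten.mpr ⟨f j, ?_, hmem j⟩
      simp [hL, List.mem_map]
    exact ⟨L ++ [ops i v], good_snoc_op hgood i v hmemL, by simp⟩

end Aux

theorem mem_Mset_iff_description {T : Type*} {ι : Type*} (n : ι → ℕ)
    (ops : ∀ i : ι, (Fin (n i) → T) → T) (Base : Set T) (x : T) :
    x ∈ Mset n ops Base ↔ ∃ l : List T, IsDescription n ops Base l x := by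
  constructor
  · intro hx
    have hS := hx _ (recClosed_good_set (n := n) (ops := ops) (Base := Base))
    obtain ⟨l, hl, hmem⟩ := hS
    exact ⟨l ++ [x], description_of_good hl hmem⟩
  · rintro ⟨l, hne, hlast, hgood⟩ S hS
    obtain ⟨hBase, hops⟩ := hS
    have key : ∀ k, ∀ h : k < l.length, l.get ⟨k, h⟩ ∈ S := by
      intro k
      induction k using Nat.strong_induction_on with
      | _ k ih =>
        intro h
        rcases hgood ⟨k, h⟩ with hb | ⟨i, v, hv, hw⟩
        · exact hBase hb
        · rw [hv]
          refine hops i v fun j => ?_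
          obtain ⟨q, hq, hqv⟩ := hw j
          rw [← hqv]
          exact ih q hq q.isLt
    have hlen : 0 < l.length := List.length_pos_iff.mpr hne
    have : l.getLast hne = x := by
      rw [List.getLast?_eq_getLast hne] at hlast
      exact Option.some_injective _ hlast
    rw [← this, List.getLast_eq_getElem]
    exact key _ _
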